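/- Let φ, ψ be Hausdorff functions satisfying ψ(2ε) ≤ C·φ(ε) for all ε > 0 and some constant C > 0, with φ(ε) → 0 as ε → 0. Then there exists a compact ultrametric space K (a compact product in E) with a probability measure μ such that both the φ-Hausdorff measure of K and the ψ-packing measure of K are finite and positive; indeed D̄^φ_μ · H^φ(K) = 1 = D̲^ψ_μ · P^ψ(K), where D̄^φ_μ and D̲^ψ_μ are the (constant) upper φ-density and lower ψ-density of μ. -/

import Mathlib

open scoped Classical ENNReal
open Filter Topology MeasureTheory

/-- The minimal index (counting from 1) at which two elements of the compact product
`K = ∏_k {1,…,n k}` differ. -/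
noncomputable def chiK {n : ℕ → ℕ} (x y : ∀ k, Fin (n k)) : ℕ := sInf {k | x k ≠ y k} + 1

/-- The ultrametric `δ(x,y) = 2^{-χ(x,y)}` on the compact product. -/
noncomputable def deltaK {n : ℕ → ℕ} (x y : ∀ k, Fin (n k)) : ℝ :=
  if x = y then 0 else (2 : ℝ) ^ (-(chiK x y : ℤ))

/-- The open `δ`-ball of center `x` and radius `ε`. -/
def BallK {n : ℕ → ℕ} (x : ∀ k, Fin (n k)) (ε : ℝ) : Set (∀ k, Fin (n k)) :=
  {y | deltaK x y < ε}

/-- The equilibrium state: the product of the uniform probability measures, characterized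
by its values on cylinders. -/
def IsEquilibrium {n : ℕ → ℕ} (μ : Measure (∀ k, Fin (n k))) : Prop :=
  ∀ (k : ℕ) (s : ∀ j, Fin (n j)),
    μ {y | ∀ j < k, y j = s j} = ∏ j ∈ Finset.range k, ((n j : ℝ≥0∞))⁻¹

/-- Hausdorff functions: continuous nondecreasing, vanishing exactly at `0`. -/
def IsHausdorffFn (φ : ℝ → ℝ) : Prop :=
  ContinuousOn φ (Set.Ici 0) ∧ MonotoneOn φ (Set.Ici 0) ∧ φ 0 = 0 ∧ ∀ ε > 0, 0 < φ ε

/-- The upper `φ`-density of `μ` at `x`. -/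
noncomputable def upperDensK {n : ℕ → ℕ} (μ : Measure (∀ k, Fin (n k))) (φ : ℝ → ℝ)
    (x : ∀ k, Fin (n k)) : ℝ≥0∞ :=
  Filter.limsup (fun ε : ℝ => μ (BallK x ε) / ENNReal.ofReal (φ ε)) (𝓝[>] 0)

/-- The lower `φ`-density of `μ` at `x`. -/
noncomputable def lowerDensK {n : ℕ → ℕ} (μ : Measure (∀ k, Fin (n k))) (φ : ℝ → ℝ)
    (x : ∀ k, Fin (n k)) : ℝ≥0∞ :=
  Filter.liminf (fun ε : ℝ => μ (BallK x ε) / ENNReal.ofReal (φ ε)) (𝓝[>] 0)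

/-- The `φ`-Hausdorff measure on the compact product, defined via countable covers by
open balls of radii at most `ε`, letting `ε → 0`. -/
noncomputable def HK {n : ℕ → ℕ} (φ : ℝ → ℝ) (S : Set (∀ k, Fin (n k))) : ℝ≥0∞ :=
  ⨆ (ε : ℝ) (_ : 0 < ε),
    ⨅ (c : ℕ → (∀ k, Fin (n k)) × ℝ)
      (_ : (∀ i, 0 ≤ (c i).2 ∧ (c i).2 ≤ ε) ∧ S ⊆ ⋃ i, BallK (c i).1 (c i).2),
      ∑' i, ENNReal.ofReal (φ (c i).2)

/-- The `φ`-packing premeasure on the compact product, defined via countable packs by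
disjoint open balls centered in the set, of radii at most `ε`, letting `ε → 0`. -/
noncomputable def PK0 {n : ℕ → ℕ} (φ : ℝ → ℝ) (S : Set (∀ k, Fin (n k))) : ℝ≥0∞ :=
  ⨅ (ε : ℝ) (_ : 0 < ε),
    ⨆ (c : ℕ → (∀ k, Fin (n k)) × ℝ)
      (_ : (∀ i, (c i).1 ∈ S ∧ 0 ≤ (c i).2 ∧ (c i).2 ≤ ε) ∧
        Pairwise fun i j => Disjoint (BallK (c i).1 (c i).2) (BallK (c j).1 (c j).2)),
      ∑' i, ENNReal.ofReal (φ (c i).2)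

/-- The `φ`-packing measure on the compact product. -/
noncomputable def PK {n : ℕ → ℕ} (φ : ℝ → ℝ) (S : Set (∀ k, Fin (n k))) : ℝ≥0∞ :=
  ⨅ (F : ℕ → Set (∀ k, Fin (n k))) (_ : S ⊆ ⋃ m, F m), ∑' m, PK0 φ (F m)

def Cyl {n : ℕ → ℕ} (x : ∀ k, Fin (n k)) (k : ℕ) : Set (∀ k, Fin (n k)) :=
  {y | ∀ j < k, y j = x j}

lemma two_zpow_pos (a : ℤ) : (0:ℝ) < 2 ^ a := zpow_pos (by norm_num) a

lemma two_zpow_lt_iff {a b : ℤ} : (2:ℝ) ^ a < 2 ^ b ↔ a < b :=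
  zpow_lt_zpow_iff_right₀ (by norm_num)

lemma two_zpow_le_iff {a b : ℤ} : (2:ℝ) ^ a ≤ 2 ^ b ↔ a ≤ b :=
  zpow_le_zpow_iff_right₀ (by norm_num)

lemma ballK_eq_cyl {n : ℕ → ℕ} (x : ∀ k, Fin (n k)) (k : ℕ) (ε : ℝ)
    (h1 : (2:ℝ) ^ (-(k+1:ℤ)) < ε) (h2 : ε ≤ 2 ^ (-(k:ℤ))) :
    BallK x ε = Cyl x k := by
  have hε : 0 < ε := (two_zpow_pos _).trans h1
  ext y
  simp only [BallK, Cyl, Set.mem_setOf_eq, deltaK]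
  split_ifs with hxy
  · subst hxy; simp [hε]
  · have hne : {j | x j ≠ y j}.Nonempty := by
      by_contra hemp
      rw [Set.not_nonempty_iff_eq_empty, Set.eq_empty_iff_forall_notMem] at hemp
      exact hxy (funext fun j => not_not.mp (hemp j))
    set D := {j | x j ≠ y j} with hD
    have hmem : sInf D ∈ D := Nat.sInf_mem hne
    have hchi : chiK x y = sInf D + 1 := rfl
    constructor
    · intro hlt j hj
      have h3 : (2:ℝ) ^ (-(chiK x y:ℤ)) < 2 ^ (-(k:ℤ)) := lt_of_lt_of_le hlt h2
      rw [two_zpow_lt_iff] at h3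
      have hk : k ≤ sInf D := by rw [hchi] at h3; omega
      by_contra hne2
      have hjD : j ∈ D := fun hc => hne2 hc.symm
      have := Nat.sInf_le hjD
      omega
    · intro hagree
      have hk : k ≤ sInf D := by
        by_contra hlt
        push_neg at hlt
        exact hmem (hagree _ hlt).symm
      refine lt_of_le_of_lt ?_ h1
      rw [two_zpow_le_iff, hchi]
      push_cast
      omega

section Levels

/-- powers of 1/2 -/
noncomputable def pw (k : ℕ) : ℝ := (2:ℝ) ^ (-(k:ℤ))

lemma pw_pos (k : ℕ) : 0 < pw k := zpow_pos (by norm_num) _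

lemma pw_anti {k l : ℕ} (h : k ≤ l) : pw l ≤ pw k := by
  rw [pw, pw, zpow_le_zpow_iff_right₀ (by norm_num : (1:ℝ) < 2)]
  omega

lemma pw_succ_lt (k : ℕ) : pw (k+1) < pw k := by
  rw [pw, pw, zpow_lt_zpow_iff_right₀ (by norm_num : (1:ℝ) < 2)]
  omega

lemma pw_zero : pw 0 = 1 := by norm_num [pw]

lemma pw_two_mul (k : ℕ) : 2 * pw (k+1) = pw k := by
  rw [pw, pw]
  rw [show (-(k+1:ℕ):ℤ) = -(k:ℤ) - 1 by push_cast; ring, zpow_sub₀ (by norm_num)]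
  ring

lemma pw_tendsto : Tendsto pw atTop (𝓝 0) := by
  have : pw = fun k : ℕ => (2⁻¹ : ℝ) ^ k := by
    funext k
    rw [pw, zpow_neg, inv_pow, zpow_natCast]
  rw [this]
  exact tendsto_pow_atTop_nhds_zero_of_lt_one (by norm_num) (by norm_num)

lemma exists_level {ε : ℝ} (hε : 0 < ε) {K : ℕ} (hK : ε ≤ pw K) :
    ∃ k, K ≤ k ∧ pw (k+1) < ε ∧ ε ≤ pw k := by
  obtain ⟨M, hM⟩ := (pw_tendsto.eventually (eventually_lt_nhds hε)).exists_forall_of_atTop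
  set P : ℕ → Prop := fun j => ε ≤ pw j with hP
  have hPK : P K := hK
  have hKM : K ≤ M := by
    by_contra hc
    push_neg at hc
    exact absurd (hM K hc.le) (not_lt.mpr hK)
  set k := Nat.findGreatest P M with hk
  have hPk : P k := Nat.findGreatest_spec hKM hPK
  have hKk : K ≤ k := Nat.le_findGreatest hKM hPK
  have hkM : k ≤ M := Nat.findGreatest_le M
  have hkM' : k ≠ M := by
    intro h
    exact absurd (hM M le_rfl) (not_lt.mpr (h ▸ hPk))
  have hnot : ¬ P (k+1) := Nat.findGreatest_is_greatest (Nat.lt_succ_self k) (by omega)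
  exact ⟨k, hKk, not_le.mp hnot, hPk⟩

end Levels

-- ENNReal helpers
lemma inv_div_ofReal (N : ℕ) (hN : 0 < N) (r : ℝ) :
    ((N:ℝ≥0∞))⁻¹ / ENNReal.ofReal r = (ENNReal.ofReal ((N:ℝ) * r))⁻¹ := by
  rw [ENNReal.ofReal_mul (by positivity), ENNReal.ofReal_natCast,
    ENNReal.mul_inv (Or.inl (by exact_mod_cast hN.ne')) (Or.inl (ENNReal.natCast_ne_top N)),
    div_eq_mul_inv]

lemma ofReal_nat_mul_inv_mul (N : ℕ) (hN : 0 < N) (r : ℝ) :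
    ENNReal.ofReal ((N:ℝ) * r) * ((N:ℝ≥0∞))⁻¹ = ENNReal.ofReal r := by
  rw [ENNReal.ofReal_mul (by positivity), ENNReal.ofReal_natCast, mul_comm ((N:ℝ≥0∞)) _,
    mul_assoc, ENNReal.mul_inv_cancel (by exact_mod_cast hN.ne') (ENNReal.natCast_ne_top N),
    mul_one]

section Measure
variable (m : ℕ → ℕ)

abbrev XX := ∀ k, Fin (m k + 1)

noncomputable def KunivX : TopologicalSpace.PositiveCompacts (XX m) :=
  ⟨⟨Set.univ, isCompact_univ⟩, by simp⟩

noncomputable def muX : Measure (XX m) := Measure.addHaarMeasure (KunivX m)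

instance : (muX m).IsAddLeftInvariant := Measure.isAddLeftInvariant_addHaarMeasure _

lemma muX_univ : muX m Set.univ = 1 := Measure.addHaarMeasure_self (K₀ := KunivX m)

instance : IsProbabilityMeasure (muX m) := ⟨muX_univ m⟩

/-- restriction to first k coordinates -/
def resX (k : ℕ) (y : XX m) : ∀ j : Fin k, Fin (m j + 1) := fun j => y j

lemma measurable_resX (k : ℕ) : Measurable (resX m k) := by
  apply measurable_pi_lambda
  exact fun j => measurable_pi_apply _

lemma cyl_eq_fiber (k : ℕ) (s : XX m) :
    {y : XX m | ∀ j < k, y j = s j} = resX m k ⁻¹' {resX m k s} := by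
  ext y
  simp only [Set.mem_setOf_eq, Set.mem_preimage, Set.mem_singleton_iff, funext_iff, resX]
  constructor
  · intro h j; exact h j j.2
  · intro h j hj; exact h ⟨j, hj⟩

lemma fiber_measure_eq (k : ℕ) (e e' : ∀ j : Fin k, Fin (m j + 1)) :
    muX m (resX m k ⁻¹' {e}) = muX m (resX m k ⁻¹' {e'}) := by
  classical
  set v : XX m := fun j => if h : j < k then e ⟨j, h⟩ - e' ⟨j, h⟩ else 0 with hv
  have hvj : ∀ j : Fin k, v (j:ℕ) = e j - e' j := by
    intro j
    have hj : (j:ℕ) < k := j.2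
    simp only [hv, dif_pos hj, Fin.eta]
  have key : resX m k ⁻¹' {e'} = (fun y => v + y) ⁻¹' (resX m k ⁻¹' {e}) := by
    ext y
    simp only [Set.mem_preimage, Set.mem_singleton_iff, funext_iff, resX, Pi.add_apply]
    constructor
    · intro h j
      calc v ↑j + y ↑j = (e j - e' j) + e' j := by rw [hvj, h j]
        _ = e j := by abel
    · intro h j
      calc y ↑j = -(v ↑j) + (v ↑j + y ↑j) := by abel
        _ = -(v ↑j) + e j := by rw [h j]
        _ = e' j := by rw [hvj]; abel
  rw [key, measure_preimage_add]

lemma measurable_fiber (k : ℕ) (e : ∀ j : Fin k, Fin (m j + 1)) :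
    MeasurableSet (resX m k ⁻¹' {e}) :=
  (measurable_resX m k) (MeasurableSet.singleton e)

def NprodX (k : ℕ) : ℕ := ∏ j ∈ Finset.range k, (m j + 1)

lemma NprodX_pos (k : ℕ) : 0 < NprodX m k :=
  Finset.prod_pos fun j _ => Nat.succ_pos _

lemma card_ek (k : ℕ) : Fintype.card (∀ j : Fin k, Fin (m j + 1)) = NprodX m k := by
  rw [Fintype.card_pi]
  simp only [Fintype.card_fin]
  rw [NprodX, ← Fin.prod_univ_eq_prod_range]

lemma fiber_measure (k : ℕ) (e : ∀ j : Fin k, Fin (m j + 1)) :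
    muX m (resX m k ⁻¹' {e}) = ((NprodX m k : ℕ) : ℝ≥0∞)⁻¹ := by
  classical
  have hpart : (⋃ e' : ∀ j : Fin k, Fin (m j + 1), resX m k ⁻¹' {e'}) = Set.univ := by
    ext y; simp only [Set.mem_iUnion, Set.mem_univ, iff_true]
    exact ⟨resX m k y, rfl⟩
  have hdisj : Pairwise fun (e₁ e₂ : ∀ j : Fin k, Fin (m j + 1)) =>
      Disjoint (resX m k ⁻¹' {e₁}) (resX m k ⁻¹' {e₂}) := by
    intro e₁ e₂ hne
    rw [Set.disjoint_iff_inter_eq_empty, Set.eq_empty_iff_forall_notMem]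
    rintro y ⟨h1, h2⟩
    exact hne ((Set.mem_singleton_iff.mp h1).symm.trans (Set.mem_singleton_iff.mp h2))
  have hsum : ∑' e' : ∀ j : Fin k, Fin (m j + 1), muX m (resX m k ⁻¹' {e'}) = 1 := by
    rw [← measure_iUnion hdisj (fun e' => measurable_fiber m k e'), hpart, muX_univ]
  have hconst : ∀ e' : ∀ j : Fin k, Fin (m j + 1),
      muX m (resX m k ⁻¹' {e'}) = muX m (resX m k ⁻¹' {e}) :=
    fun e' => fiber_measure_eq m k e' e
  rw [tsum_fintype] at hsum
  simp only [hconst] at hsum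
  rw [Finset.sum_const, Finset.card_univ, card_ek] at hsum
  have hcard0 : ((NprodX m k : ℕ) : ℝ≥0∞) ≠ 0 := by
    exact_mod_cast (NprodX_pos m k).ne'
  have hcardt : ((NprodX m k : ℕ) : ℝ≥0∞) ≠ ⊤ := ENNReal.natCast_ne_top _
  have := congrArg (fun z => ((NprodX m k : ℕ) : ℝ≥0∞)⁻¹ * z) hsum
  simp only [nsmul_eq_mul, ← mul_assoc, ENNReal.inv_mul_cancel hcard0 hcardt, one_mul,
    mul_one] at this
  exact this

lemma muX_cyl (k : ℕ) (s : XX m) :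
    muX m {y : XX m | ∀ j < k, y j = s j} = ((NprodX m k : ℕ) : ℝ≥0∞)⁻¹ := by
  rw [cyl_eq_fiber, fiber_measure]

lemma isEquilibrium_muX : IsEquilibrium (muX m) := by
  intro k s
  rw [muX_cyl]
  rw [show ((NprodX m k : ℕ) : ℝ≥0∞) = ∏ j ∈ Finset.range k, ((m j + 1 : ℕ) : ℝ≥0∞) by
        rw [NprodX]; push_cast; rfl,
    ENNReal.prod_inv_distrib (by intro i _ j _ _; left; simp)]

end Measure

lemma ceil_mul_ge {x : ℝ} (hx : 0 < x) {n : ℕ} (hn : ⌈1/x⌉₊ ≤ n) : 1 ≤ (n:ℝ) * x := by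
  have h1 : 1/x ≤ (n:ℝ) := (Nat.le_ceil _).trans (by exact_mod_cast hn)
  calc (1:ℝ) = (1/x) * x := by field_simp
    _ ≤ (n:ℝ) * x := mul_le_mul_of_nonneg_right h1 hx.le

lemma ceil_mul_le {x : ℝ} (hx : 0 < x) : (⌈1/x⌉₊ : ℝ) * x ≤ 1 + x := by
  have h1 : (⌈1/x⌉₊ : ℝ) < 1/x + 1 := Nat.ceil_lt_add_one (by positivity)
  have := mul_le_mul_of_nonneg_right h1.le hx.le
  calc (⌈1/x⌉₊ : ℝ) * x ≤ (1/x + 1) * x := this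
    _ = 1 + x := by field_simp [add_mul]

section Seq
variable (q t : ℕ → ℝ) (C : ℝ)

noncomputable def nch (k : ℕ) (N : ℕ) (md : Bool) : ℕ :=
  if md then max ⌈1/(N * q (k+1))⌉₊ (max ⌈1/(N * t (k+1))⌉₊ 1)
  else if (N : ℝ) * q (k+1) < 1 then max ⌈1/(N * q (k+1))⌉₊ 1 else 1

noncomputable def mdch (k : ℕ) (N : ℕ) (md : Bool) : Bool :=
  if md then false else if (N : ℝ) * q (k+1) < 1 then true else false

noncomputable def stq : ℕ → ℕ × Bool
  | 0 => (1, true)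
  | k+1 => ((stq k).1 * nch q t k (stq k).1 (stq k).2, mdch q k (stq k).1 (stq k).2)

noncomputable def Nq (k : ℕ) : ℕ := (stq q t k).1

lemma Nq_zero : Nq q t 0 = 1 := rfl

lemma Nq_succ (k : ℕ) : Nq q t (k+1) = Nq q t k * nch q t k (Nq q t k) (stq q t k).2 := rfl

lemma md_succ (k : ℕ) : (stq q t (k+1)).2 = mdch q k (Nq q t k) (stq q t k).2 := rfl

variable (hq : ∀ k, 0 < q k) (ht : ∀ k, 0 < t k) (hC : 0 < C)
  (hqt : ∀ k, t k ≤ C * q k) (hqm : ∀ k, q (k+1) ≤ q k) (htm : ∀ k, t (k+1) ≤ t k)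
  (hq0 : Tendsto q atTop (𝓝 0))

lemma nch_pos (k : ℕ) (N : ℕ) (md : Bool) : 0 < nch q t k N md := by
  rw [nch]; split_ifs <;> simp [Nat.ceil_pos]

lemma Nq_pos (k : ℕ) : 0 < Nq q t k := by
  induction k with
  | zero => exact Nat.one_pos
  | succ k ih => rw [Nq_succ]; exact Nat.mul_pos ih (nch_pos q t k _ _)

lemma nch_cases (k : ℕ) (N : ℕ) (md : Bool) :
    ⌈1/((N:ℝ) * q (k+1))⌉₊ ≤ nch q t k N md ∨ (md = false ∧ 1 ≤ (N:ℝ) * q (k+1)) := by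
  rw [nch]
  split_ifs with h1 h2
  · exact Or.inl (Nat.le_max_left _ _)
  · exact Or.inl (Nat.le_max_left _ _)
  · push_neg at h2
    exact Or.inr ⟨by simpa using h1, h2⟩

include hq in
lemma step_q_lower (k : ℕ) : 1 ≤ (Nq q t (k+1) : ℝ) * q (k+1) := by
  set N := Nq q t k with hN
  have hNpos : 0 < N := Nq_pos q t k
  set x := (N:ℝ) * q (k+1) with hx
  have hxpos : 0 < x := by
    have := hq (k+1); positivity
  have heq : (Nq q t (k+1) : ℝ) * q (k+1) = (nch q t k N (stq q t k).2 : ℝ) * x := by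
    rw [Nq_succ]; push_cast; ring
  rw [heq]
  rcases nch_cases q t k N (stq q t k).2 with h | ⟨hmd, h⟩
  · exact ceil_mul_ge hxpos h
  · have hn := nch_pos q t k N (stq q t k).2
    have : (1:ℝ) ≤ (nch q t k N (stq q t k).2 : ℝ) := by exact_mod_cast hn
    nlinarith

include hq in
lemma boost_bound (k : ℕ) (hb : (stq q t (k+1)).2 = true) :
    (Nq q t (k+1) : ℝ) * q (k+1) ≤ 2 := by
  have hmd : (stq q t k).2 = false ∧ (Nq q t k : ℝ) * q (k+1) < 1 := by
    rw [md_succ, mdch] at hb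
    split_ifs at hb with h1 h2
    · exact ⟨by simpa using h1, h2⟩
  obtain ⟨hmd, hx1⟩ := hmd
  set N := Nq q t k with hN
  set x := (N:ℝ) * q (k+1) with hx
  have hxpos : 0 < x := by
    have := hq (k+1); have := Nq_pos q t k; positivity
  have heq : (Nq q t (k+1) : ℝ) * q (k+1) = (nch q t k N (stq q t k).2 : ℝ) * x := by
    rw [Nq_succ]; push_cast; ring
  rw [heq, hmd, nch]
  simp only [Bool.false_eq_true, if_false, ← hx]
  rw [if_pos hx1]
  have hA : 1 ≤ ⌈1/x⌉₊ := by
    rw [Nat.one_le_ceil_iff]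
    positivity
  rw [max_eq_left hA]
  have := ceil_mul_le hxpos
  linarith

include hq in
lemma mode_true_bound (k : ℕ) (hb : (stq q t k).2 = true) :
    (Nq q t k : ℝ) * q k ≤ max 2 (q 0) := by
  cases k with
  | zero => simp [Nq_zero, le_max_iff]
  | succ k => exact le_max_iff.mpr (Or.inl (boost_bound q t hq k hb))

noncomputable def Bc : ℝ := max (t 0) (max (2*C) (C + C*(max 2 (q 0)) + 1))

include hq ht hC hqt hqm htm in
lemma Nt_bound (k : ℕ) : (Nq q t k : ℝ) * t k ≤ Bc q t C := by
  induction k with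
  | zero =>
      simp only [Nq_zero, Nat.cast_one, one_mul, Bc]
      exact le_max_left _ _
  | succ k ih =>
      set N := Nq q t k with hN
      have hNpos : 0 < N := Nq_pos q t k
      set x := (N:ℝ) * q (k+1) with hx
      set y := (N:ℝ) * t (k+1) with hy
      have hxpos : 0 < x := by have := hq (k+1); positivity
      have hypos : 0 < y := by have := ht (k+1); positivity
      have hyx : y ≤ C * x := by
        have := hqt (k+1)
        rw [hy, hx]
        calc (N:ℝ) * t (k+1) ≤ (N:ℝ) * (C * q (k+1)) := by
              apply mul_le_mul_of_nonneg_left this (by positivity)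
          _ = C * ((N:ℝ) * q (k+1)) := by ring
      have heq : (Nq q t (k+1) : ℝ) * t (k+1) = (nch q t k N (stq q t k).2 : ℝ) * y := by
        rw [Nq_succ]; push_cast; ring
      rw [heq]
      rcases (Bool.eq_false_or_eq_true (stq q t k).2).symm with hmd | hmd
      · -- P step
        rw [hmd, nch]
        simp only [Bool.false_eq_true, if_false, ← hx, ← hy]
        split_ifs with h2
        · -- boost
          have hA : 1 ≤ ⌈1/x⌉₊ := by rw [Nat.one_le_ceil_iff]; positivity
          rw [max_eq_left hA]
          have h3 : (⌈1/x⌉₊:ℝ) * x ≤ 1 + x := ceil_mul_le hxpos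
          have h4 : (⌈1/x⌉₊:ℝ) * y ≤ C * ((⌈1/x⌉₊:ℝ) * x) := by
            have : (0:ℝ) ≤ (⌈1/x⌉₊:ℝ) := by positivity
            nlinarith
          have : (⌈1/x⌉₊:ℝ) * y ≤ C * 2 := by nlinarith
          rw [Bc]
          refine this.trans (le_max_iff.mpr (Or.inr (le_max_iff.mpr (Or.inl (by linarith)))))
        · -- no boost
          simp only [Nat.cast_one, one_mul]
          have : y ≤ (N:ℝ) * t k := by
            rw [hy]
            apply mul_le_mul_of_nonneg_left (htm k) (by positivity)
          exact (this.trans ih)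
      · -- H step
        rw [hmd, nch]
        simp only [if_true, ← hx, ← hy]
        have hxM : x ≤ max 2 (q 0) := by
          have h5 : x ≤ (N:ℝ) * q k := by
            rw [hx]; apply mul_le_mul_of_nonneg_left (hqm k) (by positivity)
          exact h5.trans (mode_true_bound q t hq k hmd)
        have hyCM : y ≤ C * max 2 (q 0) := by
          refine hyx.trans ?_
          apply mul_le_mul_of_nonneg_left hxM hC.le
        have hcast : ((max ⌈1/x⌉₊ (max ⌈1/y⌉₊ 1) : ℕ) : ℝ) * y ≤
            max ((⌈1/x⌉₊:ℝ) * y) (max ((⌈1/y⌉₊:ℝ) * y) (1 * y)) := by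
          rcases max_cases (⌈1/x⌉₊) (max ⌈1/y⌉₊ 1) with ⟨hm, _⟩ | ⟨hm, _⟩
          · rw [hm]
            exact le_max_iff.mpr (Or.inl (le_refl _))
          · rw [hm]
            rcases max_cases (⌈1/y⌉₊) 1 with ⟨hm2, _⟩ | ⟨hm2, _⟩
            · rw [hm2]
              exact le_max_iff.mpr (Or.inr (le_max_iff.mpr (Or.inl (le_refl _))))
            · rw [hm2]
              refine le_max_iff.mpr (Or.inr (le_max_iff.mpr (Or.inr (by norm_num))))
        refine hcast.trans ?_
        have hAy : (⌈1/x⌉₊:ℝ) * y ≤ C + C * max 2 (q 0) + 1 := by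
          have h3 : (⌈1/x⌉₊:ℝ) < 1/x + 1 := Nat.ceil_lt_add_one (by positivity)
          have h6 : (⌈1/x⌉₊:ℝ) * y ≤ (1/x + 1) * y := by nlinarith
          have h7 : (1/x + 1) * y = y/x + y := by field_simp
          have h8 : y/x ≤ C := by
            rw [div_le_iff₀ hxpos]
            linarith [hyx]
          have hM2 : (2:ℝ) ≤ max 2 (q 0) := le_max_left _ _
          nlinarith
        have hBy : (⌈1/y⌉₊:ℝ) * y ≤ C + C * max 2 (q 0) + 1 := by
          have h3 : (⌈1/y⌉₊:ℝ) * y ≤ 1 + y := ceil_mul_le hypos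
          nlinarith
        have h1y : 1 * y ≤ C + C * max 2 (q 0) + 1 := by
          have hM2 : (2:ℝ) ≤ max 2 (q 0) := le_max_left _ _
          nlinarith
        have : max ((⌈1/x⌉₊:ℝ) * y) (max ((⌈1/y⌉₊:ℝ) * y) (1 * y)) ≤
            C + C * max 2 (q 0) + 1 := by
          exact max_le hAy (max_le hBy h1y)
        refine this.trans ?_
        rw [Bc]
        exact le_max_iff.mpr (Or.inr (le_max_iff.mpr (Or.inr (le_refl _))))

include hq hq0 in
lemma modes_true_io (K : ℕ) : ∃ k, K ≤ k ∧ (stq q t k).2 = true := by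
  by_contra hcon
  push_neg at hcon
  have hfalse : ∀ k, K ≤ k → (stq q t k).2 = false := by
    intro k hk
    exact Bool.eq_false_iff.mpr (hcon k hk)
  have hxge : ∀ k, K ≤ k → 1 ≤ (Nq q t k : ℝ) * q (k+1) := by
    intro k hk
    have h1 := hfalse k hk
    have h2 := hfalse (k+1) (hk.trans (Nat.le_succ k))
    rw [md_succ, mdch, h1] at h2
    simp only [Bool.false_eq_true, if_false] at h2
    split_ifs at h2 with h3
    push_neg at h3
    exact h3
  have hNconst : ∀ k, K ≤ k → Nq q t k = Nq q t K := by
    intro k hk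
    induction k with
    | zero =>
        obtain rfl : K = 0 := by omega
        rfl
    | succ k ih =>
        rcases Nat.lt_or_ge K (k+1) with h | h
        · have hk' : K ≤ k := by omega
          rw [Nq_succ, hfalse k hk', nch]
          simp only [Bool.false_eq_true, if_false]
          rw [if_neg (by push_neg; exact hxge k hk'), mul_one]
          exact ih hk'
        · obtain rfl : K = k+1 := by omega
          rfl
  have hNpos : 0 < Nq q t K := Nq_pos q t K
  have hlim : ∀ᶠ k in atTop, q k < 1 / (Nq q t K : ℝ) := by
    have := hq0.eventually (eventually_lt_nhds (show (0:ℝ) < 1 / (Nq q t K : ℝ) by positivity))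
    exact this
  obtain ⟨M, hM⟩ := hlim.exists_forall_of_atTop
  set k := max M K with hk
  have h1 : q (k+1) < 1/(Nq q t K : ℝ) :=
    hM (k+1) ((le_max_left M K).trans (Nat.le_succ k))
  have h2 := hxge k (le_max_right _ _)
  rw [hNconst k (le_max_right _ _)] at h2
  have : (Nq q t K:ℝ) * q (k+1) < 1 := by
    rw [lt_div_iff₀ (by positivity)] at h1
    linarith [h1]
  linarith

include hq ht hq0 in
lemma Nt_ge_one_io (K : ℕ) : ∃ k, K ≤ k ∧ 1 ≤ (Nq q t k : ℝ) * t k := by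
  obtain ⟨k₀, hk₀, hmd⟩ := modes_true_io q t hq hq0 K
  refine ⟨k₀ + 1, by omega, ?_⟩
  set N := Nq q t k₀ with hN
  have hNpos : 0 < N := Nq_pos q t k₀
  set y := (N:ℝ) * t (k₀+1) with hy
  have hypos : 0 < y := by have := ht (k₀+1); positivity
  have heq : (Nq q t (k₀+1) : ℝ) * t (k₀+1) = (nch q t k₀ N (stq q t k₀).2 : ℝ) * y := by
    rw [Nq_succ]; push_cast; ring
  rw [heq, hmd, nch]
  simp only [if_true, ← hy]
  refine ceil_mul_ge hypos ?_
  exact le_max_of_le_right (Nat.le_max_left _ _)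

include hq hq0 in
lemma Nq_le_two_io (K : ℕ) : ∃ k, K ≤ k ∧ (Nq q t k : ℝ) * q k ≤ 2 := by
  obtain ⟨k, hk, hmd⟩ := modes_true_io q t hq hq0 (K+1)
  obtain ⟨j, rfl⟩ : ∃ j, k = j + 1 := ⟨k - 1, by omega⟩
  exact ⟨j+1, by omega, boost_bound q t hq j hmd⟩

end Seq


section Analysis
variable (m : ℕ → ℕ)

instance : Inhabited (XX m) := ⟨fun _ => 0⟩

/-- extension of a finite sequence by zero -/
def extX (k : ℕ) (e : ∀ j : Fin k, Fin (m j + 1)) : XX m :=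
  fun j => if h : j < k then e ⟨j, h⟩ else 0

lemma resX_extX (k : ℕ) (e : ∀ j : Fin k, Fin (m j + 1)) : resX m k (extX m k e) = e := by
  funext j
  show extX m k e j = e j
  rw [extX]
  simp only [j.2, dif_pos, Fin.eta]

lemma deltaK_nonneg {x y : XX m} : 0 ≤ deltaK x y := by
  rw [deltaK]
  split_ifs
  · exact le_refl 0
  · exact (two_zpow_pos _).le

lemma deltaK_lt_one {x y : XX m} : deltaK x y < 1 := by
  rw [deltaK]
  split_ifs
  · norm_num
  · have h1 : (2:ℝ) ^ (-(chiK x y:ℤ)) ≤ 2 ^ (-1:ℤ) := by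
      rw [two_zpow_le_iff]
      have : 1 ≤ chiK x y := Nat.le_add_left 1 _
      omega
    have h2 : (2:ℝ) ^ (-1:ℤ) < 1 := by norm_num
    linarith

lemma ballK_univ {x : XX m} {ε : ℝ} (hε : 1 ≤ ε) : BallK x ε = Set.univ := by
  rw [Set.eq_univ_iff_forall]
  intro y
  exact lt_of_lt_of_le (deltaK_lt_one m) hε

lemma ballK_empty {x : XX m} {ε : ℝ} (hε : ε ≤ 0) : BallK x ε = ∅ := by
  rw [Set.eq_empty_iff_forall_notMem]
  intro y hy
  exact absurd (lt_of_le_of_lt (deltaK_nonneg m) hy) (not_lt.mpr hε)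

lemma cyl_eq (x : XX m) (k : ℕ) : Cyl x k = resX m k ⁻¹' {resX m k x} := cyl_eq_fiber m k x

lemma measurable_ballK (x : XX m) (ε : ℝ) : MeasurableSet (BallK x ε) := by
  rcases le_or_gt ε 0 with hε | hε
  · rw [ballK_empty m hε]; exact MeasurableSet.empty
  · rcases le_or_gt ε 1 with hε1 | hε1
    · obtain ⟨k, _, h1, h2⟩ := exists_level hε (K := 0) (by rwa [pw_zero])
      rw [show BallK x ε = Cyl x k from ballK_eq_cyl x k ε h1 h2, cyl_eq]
      exact measurable_fiber m k _
    · rw [ballK_univ m hε1.le]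
      exact MeasurableSet.univ

lemma muX_ballK (x : XX m) {ε : ℝ} {k : ℕ} (h1 : pw (k+1) < ε) (h2 : ε ≤ pw k) :
    muX m (BallK x ε) = ((NprodX m k : ℕ) : ℝ≥0∞)⁻¹ := by
  rw [show BallK x ε = Cyl x k from ballK_eq_cyl x k ε h1 h2]
  exact muX_cyl m k x

noncomputable def aseqX (φ : ℝ → ℝ) (k : ℕ) : ℝ≥0∞ :=
  ENNReal.ofReal ((NprodX m k : ℝ) * φ (pw (k+1)))

noncomputable def bseqX (φ : ℝ → ℝ) (k : ℕ) : ℝ≥0∞ :=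
  ENNReal.ofReal ((NprodX m k : ℝ) * φ (pw k))

variable (φ : ℝ → ℝ)

lemma ratio_eq (x : XX m) {ε : ℝ} {k : ℕ} (h1 : pw (k+1) < ε) (h2 : ε ≤ pw k) :
    muX m (BallK x ε) / ENNReal.ofReal (φ ε)
      = (ENNReal.ofReal ((NprodX m k : ℝ) * φ ε))⁻¹ := by
  rw [muX_ballK m x h1 h2, inv_div_ofReal _ (NprodX_pos m k)]

lemma ratio_le (hφ : IsHausdorffFn φ) (x : XX m) {ε : ℝ} {k : ℕ}
    (h1 : pw (k+1) < ε) (h2 : ε ≤ pw k) :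
    muX m (BallK x ε) / ENNReal.ofReal (φ ε) ≤ (aseqX m φ k)⁻¹ := by
  rw [ratio_eq m φ x h1 h2]
  apply ENNReal.inv_le_inv.mpr
  apply ENNReal.ofReal_le_ofReal
  apply mul_le_mul_of_nonneg_left _ (by positivity)
  exact hφ.2.1 (pw_pos _).le ((pw_pos _).le.trans h1.le) h1.le

lemma ratio_ge (hφ : IsHausdorffFn φ) (x : XX m) {ε : ℝ} {k : ℕ}
    (h1 : pw (k+1) < ε) (h2 : ε ≤ pw k) :
    (bseqX m φ k)⁻¹ ≤ muX m (BallK x ε) / ENNReal.ofReal (φ ε) := by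
  rw [ratio_eq m φ x h1 h2]
  apply ENNReal.inv_le_inv.mpr
  apply ENNReal.ofReal_le_ofReal
  apply mul_le_mul_of_nonneg_left _ (by positivity)
  exact hφ.2.1 ((pw_pos _).le.trans h1.le) (pw_pos _).le h2

lemma lowerDens_eq (hφ : IsHausdorffFn φ) (x : XX m) :
    lowerDensK (muX m) φ x = (limsup (bseqX m φ) atTop)⁻¹ := by
  have hanti : Antitone (Inv.inv : ℝ≥0∞ → ℝ≥0∞) := fun a b hab => ENNReal.inv_le_inv.mpr hab
  have hinv : (limsup (bseqX m φ) atTop)⁻¹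
      = liminf (fun k => (bseqX m φ k)⁻¹) atTop := by
    have hcont : ContinuousAt (Inv.inv : ℝ≥0∞ → ℝ≥0∞) (limsup (bseqX m φ) atTop) := by
      fun_prop
    exact hanti.map_limsup_of_continuousAt (bseqX m φ) hcont
  rw [hinv]
  apply le_antisymm
  · refine le_of_forall_gt_imp_ge_of_dense ?_
    intro a ha
    have hfreq : ∃ᶠ k in atTop, (bseqX m φ k)⁻¹ < a :=
      frequently_lt_of_liminf_lt (by isBoundedDefault) ha
    refine (liminf_le_of_frequently_le ?_).trans le_rfl
    rw [(nhdsGT_basis (0:ℝ)).frequently_iff]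
    intro δ hδ
    obtain ⟨K, hK⟩ := (pw_tendsto.eventually (eventually_lt_nhds hδ)).exists_forall_of_atTop
    obtain ⟨k, hkK, hk⟩ := frequently_atTop.mp hfreq K
    refine ⟨pw k, ⟨pw_pos k, lt_of_le_of_lt (pw_anti hkK) (hK K le_rfl)⟩, ?_⟩
    rw [ratio_eq m φ x (pw_succ_lt k) le_rfl]
    exact hk.le
  · refine le_of_forall_lt_imp_le_of_dense ?_
    intro c hc
    have hev : ∀ᶠ k in atTop, c < (bseqX m φ k)⁻¹ := eventually_lt_of_lt_liminf hc
    obtain ⟨K, hK⟩ := eventually_atTop.mp hev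
    refine le_liminf_of_le (by isBoundedDefault) ?_
    rw [(nhdsGT_basis (0:ℝ)).eventually_iff]
    refine ⟨pw K, pw_pos K, ?_⟩
    rintro ε ⟨hε0, hεδ⟩
    obtain ⟨k, hkK, h1, h2⟩ := exists_level hε0 hεδ.le
    exact (hK k hkK).le.trans (ratio_ge m φ hφ x h1 h2)

lemma upperDens_eq (hφ : IsHausdorffFn φ) (x : XX m) :
    upperDensK (muX m) φ x = (liminf (aseqX m φ) atTop)⁻¹ := by
  have hanti : Antitone (Inv.inv : ℝ≥0∞ → ℝ≥0∞) := fun a b hab => ENNReal.inv_le_inv.mpr hab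
  have hinv : (liminf (aseqX m φ) atTop)⁻¹
      = limsup (fun k => (aseqX m φ k)⁻¹) atTop := by
    have hcont : ContinuousAt (Inv.inv : ℝ≥0∞ → ℝ≥0∞) (liminf (aseqX m φ) atTop) := by
      fun_prop
    exact hanti.map_liminf_of_continuousAt (aseqX m φ) hcont
  rw [hinv]
  apply le_antisymm
  · refine le_of_forall_gt_imp_ge_of_dense ?_
    intro a ha
    have hev : ∀ᶠ k in atTop, (aseqX m φ k)⁻¹ < a := eventually_lt_of_limsup_lt ha
    obtain ⟨K, hK⟩ := eventually_atTop.mp hev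
    refine limsup_le_of_le (by isBoundedDefault) ?_
    rw [(nhdsGT_basis (0:ℝ)).eventually_iff]
    refine ⟨pw K, pw_pos K, ?_⟩
    rintro ε ⟨hε0, hεδ⟩
    obtain ⟨k, hkK, h1, h2⟩ := exists_level hε0 hεδ.le
    exact (ratio_le m φ hφ x h1 h2).trans (hK k hkK).le
  · refine le_of_forall_lt_imp_le_of_dense ?_
    intro c hc
    have hfreq : ∃ᶠ k in atTop, c < (aseqX m φ k)⁻¹ :=
      frequently_lt_of_lt_limsup (by isBoundedDefault) hc
    refine le_limsup_of_frequently_le ?_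
    rw [(nhdsGT_basis (0:ℝ)).frequently_iff]
    intro δ hδ
    obtain ⟨K, hK⟩ := (pw_tendsto.eventually (eventually_lt_nhds hδ)).exists_forall_of_atTop
    obtain ⟨k, hkK, hk⟩ := frequently_atTop.mp hfreq K
    -- continuity argument near pw (k+1)
    set g : ℝ → ℝ≥0∞ := fun r => (ENNReal.ofReal ((NprodX m k : ℝ) * φ r))⁻¹ with hg
    have hginv : Continuous (Inv.inv : ℝ≥0∞ → ℝ≥0∞) := by fun_prop
    have h1 : ContinuousWithinAt (fun r => (NprodX m k : ℝ) * φ r) (Set.Ici 0) (pw (k+1)) :=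
      (continuous_const.continuousWithinAt).mul (hφ.1.continuousWithinAt (Set.mem_Ici.mpr (pw_pos _).le))
    have h2 : ContinuousWithinAt g (Set.Ici 0) (pw (k+1)) :=
      (hginv.continuousAt).comp_continuousWithinAt
        ((ENNReal.continuous_ofReal.continuousAt).comp_continuousWithinAt h1)
    have hval : g (pw (k+1)) = (aseqX m φ k)⁻¹ := rfl
    have hev1 : ∀ᶠ r in 𝓝[Set.Ici 0] (pw (k+1)), g r ∈ Set.Ioi c := by
      apply h2.eventually_mem
      rw [hval]
      exact isOpen_Ioi.mem_nhds hk
    have hmono : 𝓝[>] (pw (k+1)) ≤ 𝓝[Set.Ici 0] (pw (k+1)) :=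
      nhdsWithin_mono _ (fun r hr => ((pw_pos _).trans hr).le)
    have hev2 : ∀ᶠ r in 𝓝[>] (pw (k+1)), g r ∈ Set.Ioi c := hev1.filter_mono hmono
    have hub : pw (k+1) < min (pw k) (δ/2) := by
      apply lt_min (pw_succ_lt k)
      have h3 : pw K < δ := hK K le_rfl
      have h4 : pw k ≤ pw K := pw_anti hkK
      have := pw_two_mul k
      linarith
    have hIoc : Set.Ioc (pw (k+1)) (min (pw k) (δ/2)) ∈ 𝓝[>] (pw (k+1)) :=
      Ioc_mem_nhdsGT_of_mem ⟨le_rfl, hub⟩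
    obtain ⟨ε, hgε, hεmem⟩ := (hev2.and (eventually_of_mem hIoc (fun r hr => hr))).exists
    obtain ⟨hε1, hε2⟩ := hεmem
    refine ⟨ε, ⟨(pw_pos _).trans hε1, ?_⟩, ?_⟩
    · have : ε ≤ δ/2 := hε2.trans (min_le_right _ _)
      linarith
    · rw [ratio_eq m φ x hε1 (hε2.trans (min_le_left _ _))]
      exact (Set.mem_Ioi.mp hgε).le


lemma mem_ballK_of_cyl (x y : XX m) {r : ℝ} {k : ℕ} (h1 : pw (k+1) < r) (h2 : r ≤ pw k)
    (h : ∀ j < k, y j = x j) : y ∈ BallK x r := by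
  rw [ballK_eq_cyl x k r h1 h2]
  exact h

lemma HK_le (hφ : IsHausdorffFn φ) :
    HK φ (Set.univ : Set (XX m)) ≤ liminf (aseqX m φ) atTop := by
  rw [HK]
  refine iSup₂_le fun ε hε => ?_
  refine le_of_forall_gt_imp_ge_of_dense ?_
  intro a ha
  have hfreq : ∃ᶠ k in atTop, aseqX m φ k < a :=
    frequently_lt_of_liminf_lt (by isBoundedDefault) ha
  obtain ⟨K, hK⟩ := (pw_tendsto.eventually (eventually_lt_nhds hε)).exists_forall_of_atTop
  obtain ⟨k, hkK, hk⟩ := frequently_atTop.mp hfreq K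
  -- choose radius r slightly above pw (k+1)
  set gg : ℝ → ℝ≥0∞ := fun r => ENNReal.ofReal ((NprodX m k : ℝ) * φ r) with hgg
  have h2 : ContinuousWithinAt gg (Set.Ici 0) (pw (k+1)) :=
    (ENNReal.continuous_ofReal.continuousAt).comp_continuousWithinAt
      ((continuous_const.continuousWithinAt).mul
        (hφ.1.continuousWithinAt (Set.mem_Ici.mpr (pw_pos _).le)))
  have hev1 : ∀ᶠ r in 𝓝[Set.Ici 0] (pw (k+1)), gg r ∈ Set.Iio a := by
    apply h2.eventually_mem
    exact isOpen_Iio.mem_nhds hk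
  have hmono : 𝓝[>] (pw (k+1)) ≤ 𝓝[Set.Ici 0] (pw (k+1)) :=
    nhdsWithin_mono _ (fun r hr => ((pw_pos _).trans hr).le)
  have hub : pw (k+1) < min (pw k) ε := by
    apply lt_min (pw_succ_lt k)
    calc pw (k+1) < pw k := pw_succ_lt k
      _ ≤ pw K := pw_anti hkK
      _ < ε := hK K le_rfl
  have hIoc : Set.Ioc (pw (k+1)) (min (pw k) ε) ∈ 𝓝[>] (pw (k+1)) :=
    Ioc_mem_nhdsGT_of_mem ⟨le_rfl, hub⟩
  obtain ⟨r, hgr, hr1, hr2⟩ :=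
    ((hev1.filter_mono hmono).and (eventually_of_mem hIoc (fun r hr => hr))).exists
  have hrpk : r ≤ pw k := hr2.trans (min_le_left _ _)
  have hrε : r ≤ ε := hr2.trans (min_le_right _ _)
  -- the cover by all level-k cylinders with radius r
  set Nk := NprodX m k with hNk
  set e := Fintype.equivFinOfCardEq (card_ek m k) with he
  classical
  set c : ℕ → XX m × ℝ := fun i =>
    if h : i < Nk then (extX m k (e.symm ⟨i, h⟩), r) else (default, 0) with hc
  have hcost : ∑' i, ENNReal.ofReal (φ (c i).2) = gg r := by
    have hz : ∀ i ∉ Finset.range Nk, ENNReal.ofReal (φ (c i).2) = 0 := by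
      intro i hi
      rw [Finset.mem_range] at hi
      rw [hc]
      simp only [dif_neg hi]
      rw [hφ.2.2.1]
      exact ENNReal.ofReal_zero
    rw [tsum_eq_sum hz]
    have : ∀ i ∈ Finset.range Nk, ENNReal.ofReal (φ (c i).2) = ENNReal.ofReal (φ r) := by
      intro i hi
      rw [Finset.mem_range] at hi
      rw [hc]
      simp only [dif_pos hi]
    rw [Finset.sum_congr rfl this, Finset.sum_const, Finset.card_range]
    simp only [hgg]
    rw [ENNReal.ofReal_mul (by positivity), ENNReal.ofReal_natCast, nsmul_eq_mul]
  have hp1 : ∀ i, 0 ≤ (c i).2 ∧ (c i).2 ≤ ε := by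
    intro i
    simp only [hc]
    split_ifs with h
    · exact ⟨((pw_pos _).trans hr1).le, hrε⟩
    · exact ⟨le_rfl, hε.le⟩
  have hp2 : (Set.univ : Set (XX m)) ⊆ ⋃ i, BallK (c i).1 (c i).2 := by
    intro y _
    rw [Set.mem_iUnion]
    refine ⟨(e (resX m k y)).1, ?_⟩
    have hlt : ((e (resX m k y)) : ℕ) < Nk := (e (resX m k y)).2
    simp only [hc, dif_pos hlt]
    apply mem_ballK_of_cyl m _ _ hr1 hrpk
    intro j hj
    have : e.symm ⟨(e (resX m k y)).1, hlt⟩ = resX m k y := by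
      rw [show (⟨(e (resX m k y)).1, hlt⟩ : Fin Nk) = e (resX m k y) from Fin.eta _ _]
      exact e.symm_apply_apply _
    rw [this]
    show y j = extX m k (resX m k y) j
    rw [extX]
    simp only [dif_pos hj]
    rfl
  refine le_trans (iInf₂_le c ⟨hp1, hp2⟩) ?_
  rw [hcost]
  exact hgr.le

lemma HK_ge (hφ : IsHausdorffFn φ) :
    liminf (aseqX m φ) atTop ≤ HK φ (Set.univ : Set (XX m)) := by
  rw [liminf_eq_iSup_iInf_of_nat]
  refine iSup_le fun K => ?_
  rw [HK]
  refine le_trans ?_ (le_iSup₂ (pw (K+1)) (pw_pos (K+1)))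
  refine le_iInf₂ fun c hc => ?_
  obtain ⟨hrad, hcov⟩ := hc
  have key : ∀ i, (⨅ ℓ, ⨅ _ : ℓ ≥ K, aseqX m φ ℓ) * muX m (BallK (c i).1 (c i).2)
      ≤ ENNReal.ofReal (φ (c i).2) := by
    intro i
    rcases eq_or_lt_of_le (hrad i).1 with hr0 | hr0
    · rw [← hr0, ballK_empty m le_rfl]
      simp
    · obtain ⟨ℓ, hℓK, h1, h2⟩ := exists_level hr0 (hrad i).2
      rw [muX_ballK m _ h1 h2]
      calc (⨅ ℓ, ⨅ _ : ℓ ≥ K, aseqX m φ ℓ) * ((NprodX m ℓ : ℕ) : ℝ≥0∞)⁻¹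
          ≤ aseqX m φ ℓ * ((NprodX m ℓ : ℕ) : ℝ≥0∞)⁻¹ := by
            apply mul_le_mul_left
            exact iInf₂_le ℓ (by omega)
        _ = ENNReal.ofReal (φ (pw (ℓ+1))) := ofReal_nat_mul_inv_mul _ (NprodX_pos m ℓ) _
        _ ≤ ENNReal.ofReal (φ (c i).2) := by
            apply ENNReal.ofReal_le_ofReal
            exact hφ.2.1 (pw_pos _).le ((pw_pos _).le.trans h1.le) h1.le
  calc (⨅ ℓ, ⨅ _ : ℓ ≥ K, aseqX m φ ℓ)
      = (⨅ ℓ, ⨅ _ : ℓ ≥ K, aseqX m φ ℓ) * muX m Set.univ := by rw [muX_univ, mul_one]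
    _ ≤ (⨅ ℓ, ⨅ _ : ℓ ≥ K, aseqX m φ ℓ) * ∑' i, muX m (BallK (c i).1 (c i).2) := by
        apply mul_le_mul_right
        calc muX m Set.univ ≤ muX m (⋃ i, BallK (c i).1 (c i).2) := measure_mono hcov
          _ ≤ ∑' i, muX m (BallK (c i).1 (c i).2) := measure_iUnion_le _
    _ = ∑' i, (⨅ ℓ, ⨅ _ : ℓ ≥ K, aseqX m φ ℓ) * muX m (BallK (c i).1 (c i).2) :=
        ENNReal.tsum_mul_left.symm
    _ ≤ ∑' i, ENNReal.ofReal (φ (c i).2) := ENNReal.tsum_le_tsum key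


lemma fibers_disjoint (k : ℕ) {e₁ e₂ : ∀ j : Fin k, Fin (m j + 1)} (hne : e₁ ≠ e₂) :
    Disjoint (resX m k ⁻¹' {e₁}) (resX m k ⁻¹' {e₂}) := by
  rw [Set.disjoint_iff_inter_eq_empty, Set.eq_empty_iff_forall_notMem]
  rintro y ⟨h1, h2⟩
  exact hne ((Set.mem_singleton_iff.mp h1).symm.trans (Set.mem_singleton_iff.mp h2))

lemma ballK_pw_eq_fiber (x : XX m) (ℓ : ℕ) :
    BallK x (pw ℓ) = resX m ℓ ⁻¹' {resX m ℓ x} := by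
  rw [ballK_eq_cyl x ℓ (pw ℓ) (pw_succ_lt ℓ) le_rfl]
  exact cyl_eq m x ℓ

lemma PK0_empty : PK0 φ (∅ : Set (XX m)) = 0 := by
  rw [PK0]
  refine le_antisymm ?_ (zero_le)
  refine le_trans (iInf₂_le 1 one_pos) ?_
  refine iSup₂_le fun c hcond => ?_
  exact absurd (hcond.1 0).1 (Set.notMem_empty _)

lemma PK_le_PK0_univ : PK φ (Set.univ : Set (XX m)) ≤ PK0 φ (Set.univ : Set (XX m)) := by
  rw [PK]
  classical
  set F : ℕ → Set (XX m) := fun i => if i = 0 then Set.univ else ∅ with hF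
  refine le_trans (iInf₂_le F ?_) ?_
  · intro y _
    rw [Set.mem_iUnion]
    exact ⟨0, by simp [hF]⟩
  · rw [tsum_eq_single 0 ?_]
    · simp [hF]
    · intro i hi
      simp only [hF, if_neg hi]
      exact PK0_empty m φ

lemma PK0_univ_le (hφ : IsHausdorffFn φ) :
    PK0 φ (Set.univ : Set (XX m)) ≤ limsup (bseqX m φ) atTop := by
  rw [limsup_eq_iInf_iSup_of_nat]
  refine le_iInf fun K => ?_
  rw [PK0]
  refine le_trans (iInf₂_le (pw K) (pw_pos K)) ?_
  refine iSup₂_le fun c hcond => ?_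
  obtain ⟨hcr, hdisj⟩ := hcond
  have key : ∀ i, ENNReal.ofReal (φ (c i).2)
      ≤ (⨆ ℓ, ⨆ _ : ℓ ≥ K, bseqX m φ ℓ) * muX m (BallK (c i).1 (c i).2) := by
    intro i
    rcases eq_or_lt_of_le (hcr i).2.1 with hr0 | hr0
    · rw [← hr0, hφ.2.2.1, ENNReal.ofReal_zero]
      exact zero_le
    · obtain ⟨ℓ, hℓK, h1, h2⟩ := exists_level hr0 (hcr i).2.2
      rw [muX_ballK m _ h1 h2]
      calc ENNReal.ofReal (φ (c i).2) ≤ ENNReal.ofReal (φ (pw ℓ)) := by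
            apply ENNReal.ofReal_le_ofReal
            exact hφ.2.1 ((pw_pos _).le.trans h1.le) (pw_pos _).le h2
        _ = bseqX m φ ℓ * ((NprodX m ℓ : ℕ) : ℝ≥0∞)⁻¹ :=
            (ofReal_nat_mul_inv_mul _ (NprodX_pos m ℓ) _).symm
        _ ≤ (⨆ ℓ, ⨆ _ : ℓ ≥ K, bseqX m φ ℓ) * ((NprodX m ℓ : ℕ) : ℝ≥0∞)⁻¹ := by
            apply mul_le_mul_left
            exact le_iSup₂ (f := fun ℓ (_ : ℓ ≥ K) => bseqX m φ ℓ) ℓ hℓK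
  calc ∑' i, ENNReal.ofReal (φ (c i).2)
      ≤ ∑' i, (⨆ ℓ, ⨆ _ : ℓ ≥ K, bseqX m φ ℓ) * muX m (BallK (c i).1 (c i).2) :=
        ENNReal.tsum_le_tsum key
    _ = (⨆ ℓ, ⨆ _ : ℓ ≥ K, bseqX m φ ℓ) * ∑' i, muX m (BallK (c i).1 (c i).2) :=
        ENNReal.tsum_mul_left
    _ = (⨆ ℓ, ⨆ _ : ℓ ≥ K, bseqX m φ ℓ) * muX m (⋃ i, BallK (c i).1 (c i).2) := by
        rw [measure_iUnion hdisj (fun i => measurable_ballK m _ _)]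
    _ ≤ (⨆ ℓ, ⨆ _ : ℓ ≥ K, bseqX m φ ℓ) * 1 := by
        apply mul_le_mul_right
        rw [← muX_univ m]
        exact measure_mono (Set.subset_univ _)
    _ ≤ _ := by rw [mul_one]

lemma PK0_key (hφ : IsHausdorffFn φ) (S : Set (XX m)) :
    limsup (bseqX m φ) atTop * muX m S ≤ PK0 φ S := by
  rw [PK0]
  refine le_iInf₂ fun ε hε => ?_
  obtain ⟨L₀, hL₀⟩ := (pw_tendsto.eventually (eventually_lt_nhds hε)).exists
  have hls : limsup (bseqX m φ) atTop ≤ ⨆ ℓ, ⨆ _ : ℓ ≥ L₀, bseqX m φ ℓ := by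
    rw [limsup_eq_iInf_iSup_of_nat]
    exact iInf_le _ L₀
  refine le_trans (mul_le_mul_left hls _) ?_
  rw [ENNReal.iSup_mul]
  refine iSup_le fun ℓ => ?_
  rw [ENNReal.iSup_mul]
  refine iSup_le fun hℓ => ?_
  have hpwε : pw ℓ ≤ ε := ((pw_anti hℓ).trans hL₀.le)
  rcases S.eq_empty_or_nonempty with rfl | ⟨s₀, hs₀⟩
  · simp
  classical
  set T : Finset (∀ j : Fin ℓ, Fin (m j + 1)) :=
    Finset.univ.filter (fun e => (resX m ℓ ⁻¹' {e} ∩ S).Nonempty) with hT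
  set w : (∀ j : Fin ℓ, Fin (m j + 1)) → XX m :=
    fun e => if h : (resX m ℓ ⁻¹' {e} ∩ S).Nonempty then h.choose else s₀ with hw
  have hwT : ∀ e ∈ T, w e ∈ resX m ℓ ⁻¹' {e} ∩ S := by
    intro e he
    rw [hT, Finset.mem_filter] at he
    rw [hw]
    simp only [dif_pos he.2]
    exact he.2.choose_spec
  set eq := T.equivFin.symm with heq
  set c : ℕ → XX m × ℝ :=
    fun i => if h : i < T.card then (w (eq ⟨i, h⟩ : _), pw ℓ) else (s₀, 0) with hc
  have hball : ∀ (i : ℕ) (h : i < T.card),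
      BallK (c i).1 (c i).2 = resX m ℓ ⁻¹' {(↑(eq ⟨i, h⟩) : ∀ j : Fin ℓ, Fin (m j + 1))} := by
    intro i h
    simp only [hc, dif_pos h]
    rw [ballK_pw_eq_fiber]
    congr 1
    have := (hwT _ (eq ⟨i, h⟩).2).1
    rw [Set.mem_preimage, Set.mem_singleton_iff] at this
    rw [this]
  have hcond : (∀ i, (c i).1 ∈ S ∧ 0 ≤ (c i).2 ∧ (c i).2 ≤ ε) ∧
      Pairwise fun i j => Disjoint (BallK (c i).1 (c i).2) (BallK (c j).1 (c j).2) := by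
    constructor
    · intro i
      simp only [hc]
      split_ifs with h
      · exact ⟨(hwT _ (eq ⟨i, h⟩).2).2, (pw_pos ℓ).le, hpwε⟩
      · exact ⟨hs₀, le_rfl, hε.le⟩
    · intro i j hij
      rcases lt_or_ge i T.card with hi | hi
      · rcases lt_or_ge j T.card with hj | hj
        · rw [hball i hi, hball j hj]
          apply fibers_disjoint
          intro hcontra
          apply hij
          have h2 : eq ⟨i, hi⟩ = eq ⟨j, hj⟩ := Subtype.ext hcontra
          have h3 := eq.injective h2
          exact Fin.mk.inj_iff.mp h3
        · have : (c j).2 = 0 := by simp only [hc, dif_neg (not_lt.mpr hj)]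
          rw [show BallK (c j).1 (c j).2 = ∅ by rw [this]; exact ballK_empty m le_rfl]
          exact Set.disjoint_empty _
      · have : (c i).2 = 0 := by simp only [hc, dif_neg (not_lt.mpr hi)]
        rw [show BallK (c i).1 (c i).2 = ∅ by rw [this]; exact ballK_empty m le_rfl]
        exact Set.empty_disjoint _
  have hsum : ∑' i, ENNReal.ofReal (φ (c i).2)
      = (T.card : ℝ≥0∞) * ENNReal.ofReal (φ (pw ℓ)) := by
    have hz : ∀ i ∉ Finset.range T.card, ENNReal.ofReal (φ (c i).2) = 0 := by
      intro i hi
      rw [Finset.mem_range] at hi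
      simp only [hc, dif_neg hi]
      rw [hφ.2.2.1, ENNReal.ofReal_zero]
    rw [tsum_eq_sum hz]
    have : ∀ i ∈ Finset.range T.card,
        ENNReal.ofReal (φ (c i).2) = ENNReal.ofReal (φ (pw ℓ)) := by
      intro i hi
      rw [Finset.mem_range] at hi
      simp only [hc, dif_pos hi]
    rw [Finset.sum_congr rfl this, Finset.sum_const, Finset.card_range, nsmul_eq_mul]
  have hbound : bseqX m φ ℓ * muX m S ≤ (T.card : ℝ≥0∞) * ENNReal.ofReal (φ (pw ℓ)) := by
    have hSsub : S ⊆ ⋃ e ∈ T, resX m ℓ ⁻¹' {e} := by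
      intro y hy
      rw [Set.mem_iUnion]
      refine ⟨resX m ℓ y, ?_⟩
      rw [Set.mem_iUnion]
      refine ⟨?_, rfl⟩
      rw [hT, Finset.mem_filter]
      exact ⟨Finset.mem_univ _, ⟨y, rfl, hy⟩⟩
    have hμU : muX m (⋃ e ∈ T, resX m ℓ ⁻¹' {e}) = (T.card : ℝ≥0∞) * ((NprodX m ℓ : ℕ) : ℝ≥0∞)⁻¹ := by
      rw [measure_biUnion_finset ?_ (fun e _ => measurable_fiber m ℓ e)]
      · rw [Finset.sum_congr rfl (fun e _ => fiber_measure m ℓ e), Finset.sum_const,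
          nsmul_eq_mul]
      · intro e₁ h₁ e₂ h₂ hne
        exact fibers_disjoint m ℓ hne
    calc bseqX m φ ℓ * muX m S
        ≤ bseqX m φ ℓ * ((T.card : ℝ≥0∞) * ((NprodX m ℓ : ℕ) : ℝ≥0∞)⁻¹) := by
          apply mul_le_mul_right
          rw [← hμU]
          exact measure_mono hSsub
      _ = (T.card : ℝ≥0∞) * (bseqX m φ ℓ * ((NprodX m ℓ : ℕ) : ℝ≥0∞)⁻¹) := by ring
      _ = (T.card : ℝ≥0∞) * ENNReal.ofReal (φ (pw ℓ)) := by
          rw [show bseqX m φ ℓ = ENNReal.ofReal ((NprodX m ℓ : ℝ) * φ (pw ℓ)) from rfl,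
            ofReal_nat_mul_inv_mul _ (NprodX_pos m ℓ)]
  refine le_trans hbound ?_
  rw [← hsum]
  exact le_iSup₂ (f := fun c (_ : (∀ i, (c i).1 ∈ S ∧ 0 ≤ (c i).2 ∧ (c i).2 ≤ ε) ∧
      Pairwise fun i j => Disjoint (BallK (c i).1 (c i).2) (BallK (c j).1 (c j).2)) =>
      ∑' i, ENNReal.ofReal (φ ((c i).2))) c hcond

lemma PK_ge (hφ : IsHausdorffFn φ) :
    limsup (bseqX m φ) atTop ≤ PK φ (Set.univ : Set (XX m)) := by
  rw [PK]
  refine le_iInf₂ fun F hF => ?_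
  calc limsup (bseqX m φ) atTop = limsup (bseqX m φ) atTop * muX m Set.univ := by
        rw [muX_univ, mul_one]
    _ ≤ limsup (bseqX m φ) atTop * ∑' i, muX m (F i) := by
        apply mul_le_mul_right
        calc muX m Set.univ ≤ muX m (⋃ i, F i) := measure_mono hF
          _ ≤ ∑' i, muX m (F i) := measure_iUnion_le _
    _ = ∑' i, limsup (bseqX m φ) atTop * muX m (F i) := ENNReal.tsum_mul_left.symm
    _ ≤ ∑' i, PK0 φ (F i) := ENNReal.tsum_le_tsum (fun i => PK0_key m φ hφ (F i))

lemma PK_eq (hφ : IsHausdorffFn φ) :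
    PK φ (Set.univ : Set (XX m)) = limsup (bseqX m φ) atTop :=
  le_antisymm ((PK_le_PK0_univ m φ).trans (PK0_univ_le m φ hφ)) (PK_ge m φ hφ)

lemma HK_eq (hφ : IsHausdorffFn φ) :
    HK φ (Set.univ : Set (XX m)) = liminf (aseqX m φ) atTop :=
  le_antisymm (HK_le m φ hφ) (HK_ge m φ hφ)


end Analysis

/-- Main theorem: for Hausdorff functions `φ, ψ` with `ψ(2ε) ≤ C φ(ε)` and `φ(ε) → 0` as
`ε → 0`, there exists a compact product `K` with equilibrium state `μ` (a probability
measure) such that `D̄^φ_μ ⬝ H^φ(K) = 1 = D̲^ψ_μ ⬝ P^ψ(K)`; in particular the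
`φ`-Hausdorff measure and the `ψ`-packing measure of `K` are finite and positive. -/
theorem stmt15 (φ ψ : ℝ → ℝ) (hφ : IsHausdorffFn φ) (hψ : IsHausdorffFn ψ)
    (C : ℝ) (hC : 0 < C) (h : ∀ ε : ℝ, 0 < ε → ψ (2 * ε) ≤ C * φ ε)
    (hφ0 : Tendsto φ (𝓝[>] (0 : ℝ)) (𝓝 0)) :
    ∃ n : ℕ → ℕ, (∀ k, 0 < n k) ∧
      ∃ μ : Measure (∀ k, Fin (n k)), IsEquilibrium μ ∧ IsProbabilityMeasure μ ∧
        ∃ D₁ D₂ : ℝ≥0∞,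
          (∀ x, upperDensK μ φ x = D₁) ∧ (∀ x, lowerDensK μ ψ x = D₂) ∧
          D₁ * HK φ (Set.univ : Set (∀ k, Fin (n k))) = 1 ∧
          D₂ * PK ψ (Set.univ : Set (∀ k, Fin (n k))) = 1 ∧
          0 < HK φ (Set.univ : Set (∀ k, Fin (n k))) ∧
          HK φ (Set.univ : Set (∀ k, Fin (n k))) < ⊤ ∧
          0 < PK ψ (Set.univ : Set (∀ k, Fin (n k))) ∧
          PK ψ (Set.univ : Set (∀ k, Fin (n k))) < ⊤ := by
  classical
  obtain ⟨hφc, hφm, hφ0', hφpos⟩ := hφ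
  obtain ⟨hψc, hψm, hψ0', hψpos⟩ := hψ
  -- the two scale sequences
  set q : ℕ → ℝ := fun k => φ (pw (k+1)) with hqdef
  set t : ℕ → ℝ := fun k => ψ (pw k) with htdef
  have hq : ∀ k, 0 < q k := fun k => hφpos _ (pw_pos _)
  have ht : ∀ k, 0 < t k := fun k => hψpos _ (pw_pos _)
  have hqt : ∀ k, t k ≤ C * q k := by
    intro k
    have h2 := h (pw (k+1)) (pw_pos _)
    rw [pw_two_mul k] at h2
    exact h2
  have hqm : ∀ k, q (k+1) ≤ q k :=
    fun k => hφm (pw_pos _).le (pw_pos _).le (pw_anti (by omega))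
  have htm : ∀ k, t (k+1) ≤ t k :=
    fun k => hψm (pw_pos _).le (pw_pos _).le (pw_anti (by omega))
  have hq0 : Tendsto q atTop (𝓝 0) := by
    apply hφ0.comp
    apply tendsto_nhdsWithin_of_tendsto_nhds_of_eventually_within
    · exact pw_tendsto.comp (tendsto_add_atTop_nat 1)
    · exact Eventually.of_forall (fun k => pw_pos _)
  -- the branching numbers
  set m' : ℕ → ℕ := fun k => nch q t k (Nq q t k) (stq q t k).2 - 1 with hm'
  have hm'succ : ∀ k, m' k + 1 = nch q t k (Nq q t k) (stq q t k).2 := by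
    intro k
    rw [hm']
    exact Nat.succ_pred_eq_of_pos (nch_pos q t k _ _)
  have hNp : ∀ k, NprodX m' k = Nq q t k := by
    intro k
    induction k with
    | zero => rfl
    | succ k ih =>
        rw [NprodX, Finset.prod_range_succ, ← NprodX, ih, hm'succ k, ← Nq_succ]
  refine ⟨fun k => m' k + 1, fun k => Nat.succ_pos _, muX m', isEquilibrium_muX m',
    inferInstance, (liminf (aseqX m' φ) atTop)⁻¹, (limsup (bseqX m' ψ) atTop)⁻¹,
    fun x => upperDens_eq m' φ ⟨hφc, hφm, hφ0', hφpos⟩ x,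
    fun x => lowerDens_eq m' ψ ⟨hψc, hψm, hψ0', hψpos⟩ x, ?_⟩
  set A := liminf (aseqX m' φ) atTop with hA
  set B := limsup (bseqX m' ψ) atTop with hB
  have haseq : ∀ k, aseqX m' φ k = ENNReal.ofReal ((Nq q t k : ℝ) * q k) := by
    intro k
    rw [aseqX, hNp k]
  have hbseq : ∀ k, bseqX m' ψ k = ENNReal.ofReal ((Nq q t k : ℝ) * t k) := by
    intro k
    rw [bseqX, hNp k]
  have hA1 : 1 ≤ A := by
    refine le_liminf_of_le (by isBoundedDefault) ?_
    rw [eventually_atTop]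
    refine ⟨1, fun k hk => ?_⟩
    obtain ⟨j, rfl⟩ : ∃ j, k = j + 1 := ⟨k - 1, by omega⟩
    rw [haseq]
    rw [show (1:ℝ≥0∞) = ENNReal.ofReal 1 from ENNReal.ofReal_one.symm]
    exact ENNReal.ofReal_le_ofReal (step_q_lower q t hq j)
  have hA2 : A ≤ ENNReal.ofReal 2 := by
    refine liminf_le_of_frequently_le ?_
    rw [frequently_atTop]
    intro K
    obtain ⟨k, hk1, hk2⟩ := Nq_le_two_io q t hq hq0 K
    refine ⟨k, hk1, ?_⟩
    rw [haseq]
    exact ENNReal.ofReal_le_ofReal hk2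
  have hA0 : A ≠ 0 := by
    intro hcon
    rw [hcon] at hA1
    exact absurd hA1 (by simp)
  have hAtop : A ≠ ⊤ := by
    intro hcon
    rw [hcon] at hA2
    exact absurd hA2 (by simp)
  have hB1 : 1 ≤ B := by
    refine le_limsup_of_frequently_le ?_
    rw [frequently_atTop]
    intro K
    obtain ⟨k, hk1, hk2⟩ := Nt_ge_one_io q t hq ht hq0 K
    refine ⟨k, hk1, ?_⟩
    rw [hbseq]
    rw [show (1:ℝ≥0∞) = ENNReal.ofReal 1 from ENNReal.ofReal_one.symm]
    exact ENNReal.ofReal_le_ofReal hk2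
  have hB2 : B ≤ ENNReal.ofReal (Bc q t C) := by
    refine limsup_le_of_le (by isBoundedDefault) ?_
    refine Eventually.of_forall (fun k => ?_)
    rw [hbseq]
    exact ENNReal.ofReal_le_ofReal (Nt_bound q t C hq ht hC hqt hqm htm k)
  have hB0 : B ≠ 0 := by
    intro hcon
    rw [hcon] at hB1
    exact absurd hB1 (by simp)
  have hBtop : B ≠ ⊤ := by
    intro hcon
    rw [hcon] at hB2
    exact absurd hB2 (by simp)
  have hHK : HK φ (Set.univ : Set (XX m')) = A := HK_eq m' φ ⟨hφc, hφm, hφ0', hφpos⟩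
  have hPK : PK ψ (Set.univ : Set (XX m')) = B := PK_eq m' ψ ⟨hψc, hψm, hψ0', hψpos⟩
  refine ⟨?_, ?_, ?_, ?_, ?_, ?_⟩
  · rw [hHK]
    exact ENNReal.inv_mul_cancel hA0 hAtop
  · rw [hPK]
    exact ENNReal.inv_mul_cancel hB0 hBtop
  · rw [hHK]
    exact lt_of_lt_of_le (by norm_num) hA1
  · rw [hHK]
    exact lt_of_le_of_lt hA2 ENNReal.ofReal_lt_top
  · rw [hPK]
    exact lt_of_lt_of_le (by norm_num) hB1
  · rw [hPK]
    exact lt_of_le_of_lt hB2 ENNReal.ofReal_lt_top
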